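/- Let α > 0 and let β > 0 be not an integer. For ν ∈ ℝ define, for z > 0, the Bessel function of the first kind by its series J_ν(z) = Σ_{k=0}^∞ (−1)^k (z/2)^{2k+ν}/(k!·Γ(k+ν+1)). Let λ, μ ∈ ℝ (not both zero) and let I ⊆ (0, ∞) be an open interval on which λ·J_β(2√(αβx)) + μ·J_{−β}(2√(αβx)) ≠ 0. Then the function w(x) := (√(αβx)/β) · ( λ·J_{β−1}(2√(αβx)) − μ·J_{1−β}(2√(αβx)) ) / ( λ·J_β(2√(αβx)) + μ·J_{−β}(2√(αβx)) ) satisfies the Riccati equation x·w′(x) − β·w(x) + β·w(x)² + α·x = 0 for all x ∈ I. (Since for non-integer β the Bessel function Y_ν is a linear combination of J_ν and J_{−ν}, this is the paper's closed-form Bessel-ratio solution (riccati_soln) of the singular Riccati equation.) -/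

import Mathlib

open Real

/-- The Bessel function of the first kind, defined by its series
`J_ν(z) = ∑_k (-1)^k (z/2)^(2k+ν) / (k! Γ(k+ν+1))` (here `(z/2)^(2k+ν)` is the real
power `Real.rpow` and `Γ` is the Gamma function). -/
noncomputable def besselJ (ν z : ℝ) : ℝ :=
  ∑' k : ℕ, (-1 : ℝ) ^ k * (z / 2) ^ (2 * (k : ℝ) + ν) /
    ((k.factorial : ℝ) * Real.Gamma ((k : ℝ) + ν + 1))

noncomputable def bc (ν : ℝ) (k : ℕ) : ℝ :=
  (-1 : ℝ) ^ k / ((k.factorial : ℝ) * Real.Gamma ((k : ℝ) + ν + 1))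

noncomputable def bS (ν t : ℝ) : ℝ := ∑' k : ℕ, bc ν k * t ^ k

lemma gam_ne {ν : ℝ} (hν : ∀ m : ℤ, ν ≠ (m : ℝ)) (x : ℝ) (hx : ∃ m : ℤ, x = (m : ℝ) + ν) :
    Real.Gamma x ≠ 0 := by
  apply Real.Gamma_ne_zero
  intro m hm
  obtain ⟨n, rfl⟩ := hx
  exact hν (-m - n) (by push_cast; linarith)

lemma hν_add {ν : ℝ} (hν : ∀ m : ℤ, ν ≠ (m : ℝ)) (n : ℤ) : ∀ m : ℤ, ν + n ≠ (m : ℝ) := by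
  intro m h
  exact hν (m - n) (by push_cast; linarith)

lemma bc_ne_zero {ν : ℝ} (hν : ∀ m : ℤ, ν ≠ (m : ℝ)) (k : ℕ) : bc ν k ≠ 0 := by
  have hΓ : Real.Gamma ((k : ℝ) + ν + 1) ≠ 0 := gam_ne hν _ ⟨k + 1, by push_cast; ring⟩
  have hf : (k.factorial : ℝ) ≠ 0 := Nat.cast_ne_zero.2 k.factorial_ne_zero
  unfold bc
  positivity

lemma bc_succ {ν : ℝ} (hν : ∀ m : ℤ, ν ≠ (m : ℝ)) (k : ℕ) :
    bc ν (k + 1) = -bc ν k / (((k : ℝ) + 1) * ((k : ℝ) + ν + 1)) := by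
  have h0 : ((k : ℝ) + ν + 1) ≠ 0 := by
    intro h
    exact hν (-(k : ℤ) - 1) (by push_cast; linarith)
  have hΓ : Real.Gamma ((k : ℝ) + ν + 1) ≠ 0 := gam_ne hν _ ⟨k + 1, by push_cast; ring⟩
  have hf : (k.factorial : ℝ) ≠ 0 := Nat.cast_ne_zero.2 k.factorial_ne_zero
  have h1 : ((k + 1 : ℕ) : ℝ) + ν + 1 = ((k : ℝ) + ν + 1) + 1 := by push_cast; ring
  unfold bc
  rw [h1, Real.Gamma_add_one h0, Nat.factorial_succ]
  push_cast
  field_simp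
  ring

lemma bsummable {ν : ℝ} (hν : ∀ m : ℤ, ν ≠ (m : ℝ)) {r : ℝ} (hr : 0 ≤ r) :
    Summable (fun k : ℕ => ((k : ℝ) + 1) * |bc ν k| * r ^ k) := by
  apply summable_of_ratio_norm_eventually_le (r := (1/2 : ℝ)) (by norm_num)
  obtain ⟨N, hN⟩ := exists_nat_ge (4 * r + |ν| + 2)
  filter_upwards [Filter.eventually_ge_atTop N] with k hk
  have hk' : (4 * r + |ν| + 2) ≤ (k : ℝ) := le_trans hN (Nat.cast_le.2 hk)
  have hab : -|ν| ≤ ν := neg_abs_le ν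
  have habs : 0 ≤ |ν| := abs_nonneg ν
  have h1 : (0 : ℝ) < (k : ℝ) + ν + 1 := by nlinarith
  have key : |bc ν (k + 1)| = |bc ν k| / (((k : ℝ) + 1) * ((k : ℝ) + ν + 1)) := by
    rw [bc_succ hν k, abs_div, abs_neg, abs_of_pos (mul_pos (by positivity) h1)]
  have key2 : |bc ν (k + 1)| * (((k : ℝ) + 1) * ((k : ℝ) + ν + 1)) = |bc ν k| := by
    rw [key]; field_simp
  have hfnn : ∀ n : ℕ, (0:ℝ) ≤ ((n : ℝ) + 1) * |bc ν n| * r ^ n := fun n => by positivity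
  rw [Real.norm_eq_abs, Real.norm_eq_abs, abs_of_nonneg (hfnn _), abs_of_nonneg (hfnn _)]
  push_cast
  have hk2 : (2 : ℝ) ≤ (k : ℝ) := by nlinarith
  have hr4' : 4 * r ≤ (k : ℝ) + ν + 1 := by nlinarith
  have main : ((k : ℝ) + 2) * r ≤ 1/2 * (((k:ℝ)+1) * ((k:ℝ)+1) * ((k:ℝ)+ν+1)) := by
    have h5 : (0:ℝ) ≤ ((k:ℝ)^2 - 3) * ((k:ℝ)+ν+1) := mul_nonneg (by nlinarith) h1.le
    have h6 : ((k:ℝ)+2) * (4*r) ≤ ((k:ℝ)+2) * ((k:ℝ)+ν+1) :=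
      mul_le_mul_of_nonneg_left hr4' (by positivity)
    have h7 : (0:ℝ) ≤ ((k:ℝ)+2) * r := mul_nonneg (by positivity) hr
    nlinarith [h5, h6, h7]
  calc ((k : ℝ) + 1 + 1) * |bc ν (k+1)| * r ^ (k+1)
      = (((k:ℝ)+2) * r) * (|bc ν (k+1)| * r ^ k) := by rw [pow_succ]; ring
    _ ≤ (1/2 * (((k:ℝ)+1) * ((k:ℝ)+1) * ((k:ℝ)+ν+1))) * (|bc ν (k+1)| * r ^ k) :=
        mul_le_mul_of_nonneg_right main (by positivity)
    _ = 1/2 * (((k:ℝ)+1) * (|bc ν (k+1)| * (((k:ℝ)+1) * ((k:ℝ)+ν+1))) * r ^ k) := by ring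
    _ = 1/2 * (((k:ℝ)+1) * |bc ν k| * r ^ k) := by rw [key2]

lemma bsummable' {ν : ℝ} (hν : ∀ m : ℤ, ν ≠ (m : ℝ)) (t : ℝ) :
    Summable (fun k : ℕ => bc ν k * t ^ k) := by
  apply Summable.of_norm
  apply Summable.of_nonneg_of_le (fun k => norm_nonneg _)
    (fun k => ?_) (bsummable hν (abs_nonneg t))
  rw [norm_mul, norm_pow, Real.norm_eq_abs, Real.norm_eq_abs]
  have : |bc ν k| * |t| ^ k ≤ ((k:ℝ)+1) * |bc ν k| * |t| ^ k := by
    nlinarith [abs_nonneg (bc ν k), pow_nonneg (abs_nonneg t) k, Nat.cast_nonneg (α := ℝ) k,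
      mul_nonneg (abs_nonneg (bc ν k)) (pow_nonneg (abs_nonneg t) k)]
  linarith

lemma bc_deriv {ν : ℝ} (hν : ∀ m : ℤ, ν ≠ (m : ℝ)) (k : ℕ) :
    (((k : ℝ) + 1)) * bc ν (k + 1) = -bc (ν + 1) k := by
  have hΓ : Real.Gamma ((k : ℝ) + ν + 2) ≠ 0 := gam_ne hν _ ⟨k + 2, by push_cast; ring⟩
  have hf : (k.factorial : ℝ) ≠ 0 := Nat.cast_ne_zero.2 k.factorial_ne_zero
  have h1 : ((k + 1 : ℕ) : ℝ) + ν + 1 = (k : ℝ) + ν + 2 := by push_cast; ring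
  have h2 : (k : ℝ) + (ν + 1) + 1 = (k : ℝ) + ν + 2 := by ring
  unfold bc
  rw [h1, h2, Nat.factorial_succ]
  push_cast
  field_simp
  ring

lemma bS_hasDerivAt {ν : ℝ} (hν : ∀ m : ℤ, ν ≠ (m : ℝ)) (t : ℝ) :
    HasDerivAt (bS ν) (-bS (ν + 1) t) t := by
  set R : ℝ := |t| + 1 with hR
  have hR1 : (1 : ℝ) ≤ R := by rw [hR]; linarith [abs_nonneg t]
  have hR0 : (0 : ℝ) ≤ R := by linarith
  have hball : t ∈ Metric.ball (0 : ℝ) R := by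
    simp [Real.norm_eq_abs, hR]
  have hder : HasDerivAt (fun y => ∑' k : ℕ, bc ν k * y ^ k)
      (∑' k : ℕ, bc ν k * ((k : ℕ) * t ^ (k - 1))) t := by
    apply hasDerivAt_tsum_of_isPreconnected (bsummable hν hR0)
      Metric.isOpen_ball (convex_ball (0:ℝ) R).isPreconnected
      (g := fun k y => bc ν k * y ^ k)
      (g' := fun k y => bc ν k * ((k : ℕ) * y ^ (k - 1)))
      (fun k y _ => (hasDerivAt_pow k y).const_mul (bc ν k))
      (fun k y hy => ?_) hball (bsummable' hν t) hball
    · have hy' : |y| ≤ R := by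
        have := mem_ball_iff_norm.1 hy
        simp [Real.norm_eq_abs] at this ⊢
        linarith [abs_nonneg y, this]
      rw [Real.norm_eq_abs, abs_mul, abs_mul, abs_pow]
      have h3 : |y| ^ (k - 1) ≤ R ^ k := by
        calc |y| ^ (k - 1) ≤ R ^ (k - 1) := pow_le_pow_left₀ (abs_nonneg y) hy' _
          _ ≤ R ^ k := pow_le_pow_right₀ hR1 (Nat.sub_le k 1)
      have h4 : |(k : ℝ)| = (k : ℝ) := abs_of_nonneg (Nat.cast_nonneg k)
      rw [h4]
      calc |bc ν k| * ((k : ℝ) * |y| ^ (k - 1))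
          ≤ |bc ν k| * ((k : ℝ) * R ^ k) := by
            apply mul_le_mul_of_nonneg_left _ (abs_nonneg _)
            exact mul_le_mul_of_nonneg_left h3 (Nat.cast_nonneg k)
        _ ≤ ((k : ℝ) + 1) * |bc ν k| * R ^ k := by
            nlinarith [abs_nonneg (bc ν k), pow_nonneg hR0 k, Nat.cast_nonneg (α := ℝ) k]
  have heq : (∑' k : ℕ, bc ν k * ((k : ℕ) * t ^ (k - 1))) = -bS (ν + 1) t := by
    have hsum : Summable (fun k : ℕ => bc ν k * ((k : ℕ) * t ^ (k - 1))) := by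
      apply Summable.of_norm
      apply Summable.of_nonneg_of_le (fun k => norm_nonneg _) (fun k => ?_) (bsummable hν hR0)
      rw [Real.norm_eq_abs, abs_mul, abs_mul, abs_pow,
        abs_of_nonneg (Nat.cast_nonneg (α := ℝ) k)]
      have h3 : |t| ^ (k - 1) ≤ R ^ k := by
        calc |t| ^ (k - 1) ≤ R ^ (k - 1) := pow_le_pow_left₀ (abs_nonneg t) (by simp [hR]) _
          _ ≤ R ^ k := pow_le_pow_right₀ hR1 (Nat.sub_le k 1)
      calc |bc ν k| * ((k : ℝ) * |t| ^ (k - 1))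
          ≤ |bc ν k| * ((k : ℝ) * R ^ k) := by
            apply mul_le_mul_of_nonneg_left _ (abs_nonneg _)
            exact mul_le_mul_of_nonneg_left h3 (Nat.cast_nonneg k)
        _ ≤ ((k : ℝ) + 1) * |bc ν k| * R ^ k := by
            nlinarith [abs_nonneg (bc ν k), pow_nonneg hR0 k, Nat.cast_nonneg (α := ℝ) k]
    rw [Summable.tsum_eq_zero_add hsum]
    simp only [Nat.cast_zero, zero_mul, mul_zero, zero_add]
    have : ∀ k : ℕ, bc ν (k + 1) * (((k : ℕ) + 1 : ℝ) * t ^ k) = -(bc (ν + 1) k * t ^ k) := by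
      intro k
      linear_combination t ^ k * bc_deriv hν k
    rw [bS, ← tsum_neg]
    apply tsum_congr
    intro k
    have h5 : bc ν (k + 1) * ((((k + 1 : ℕ)) : ℝ) * t ^ (k + 1 - 1)) =
        bc ν (k + 1) * (((k : ℕ) + 1 : ℝ) * t ^ k) := by push_cast; ring_nf
    rw [h5, this k]
  rw [bS] at *
  exact heq ▸ hder

lemma bS_rec {ν : ℝ} (hν : ∀ m : ℤ, ν ≠ (m : ℝ)) (t : ℝ) :
    bS (ν - 1) t + t * bS (ν + 1) t = ν * bS ν t := by
  have hν1 : ∀ m : ℤ, ν - 1 ≠ (m : ℝ) := by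
    intro m h; exact hν (m + 1) (by push_cast; linarith)
  have hν2 : ∀ m : ℤ, ν + 1 ≠ (m : ℝ) := by
    intro m h; exact hν (m - 1) (by push_cast; linarith)
  have hν0 : ν ≠ 0 := fun h => hν 0 (by simpa using h)
  have hΓν : Real.Gamma ν ≠ 0 := gam_ne hν _ ⟨0, by push_cast; ring⟩
  -- coefficient identities
  have hc0 : bc (ν - 1) 0 - ν * bc ν 0 = 0 := by
    unfold bc
    simp only [pow_zero, Nat.factorial_zero, Nat.cast_zero, Nat.cast_one]
    rw [show (0 : ℝ) + (ν - 1) + 1 = ν by ring, show (0 : ℝ) + ν + 1 = ν + 1 by ring,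
      Real.Gamma_add_one hν0]
    field_simp
    ring
  have hck : ∀ k : ℕ, bc (ν - 1) (k + 1) - ν * bc ν (k + 1) = -bc (ν + 1) k := by
    intro k
    have h0 : ((k : ℝ) + ν + 1) ≠ 0 := by
      intro h; exact hν (-(k : ℤ) - 1) (by push_cast; linarith)
    have hΓ : Real.Gamma ((k : ℝ) + ν + 1) ≠ 0 := gam_ne hν _ ⟨k + 1, by push_cast; ring⟩
    have hf : (k.factorial : ℝ) ≠ 0 := Nat.cast_ne_zero.2 k.factorial_ne_zero
    unfold bc
    rw [show ((k + 1 : ℕ) : ℝ) + (ν - 1) + 1 = (k : ℝ) + ν + 1 by push_cast; ring,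
      show ((k + 1 : ℕ) : ℝ) + ν + 1 = ((k : ℝ) + ν + 1) + 1 by push_cast; ring,
      show (k : ℝ) + (ν + 1) + 1 = ((k : ℝ) + ν + 1) + 1 by ring,
      Real.Gamma_add_one h0, Nat.factorial_succ]
    push_cast
    field_simp
    ring
  have s1 : Summable (fun k : ℕ => bc (ν - 1) k * t ^ k) := bsummable' hν1 t
  have s2 : Summable (fun k : ℕ => ν * (bc ν k * t ^ k)) := (bsummable' hν t).mul_left ν
  have key : bS (ν - 1) t - ν * bS ν t = - (t * bS (ν + 1) t) := by
    have e1 : bS (ν - 1) t - ν * bS ν t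
        = ∑' k : ℕ, (bc (ν - 1) k * t ^ k - ν * (bc ν k * t ^ k)) := by
      rw [bS, bS, ← tsum_mul_left, ← Summable.tsum_sub s1 s2]
    rw [e1]
    have hsum3 : Summable (fun k : ℕ => bc (ν - 1) k * t ^ k - ν * (bc ν k * t ^ k)) :=
      s1.sub s2
    rw [Summable.tsum_eq_zero_add hsum3]
    simp only [pow_zero, mul_one]
    rw [hc0, zero_add]
    have e2 : ∀ k : ℕ, bc (ν - 1) (k + 1) * t ^ (k + 1) - ν * (bc ν (k + 1) * t ^ (k + 1))
        = -(t * (bc (ν + 1) k * t ^ k)) := by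
      intro k
      have := hck k
      calc bc (ν - 1) (k + 1) * t ^ (k + 1) - ν * (bc ν (k + 1) * t ^ (k + 1))
          = (bc (ν - 1) (k + 1) - ν * bc ν (k + 1)) * t ^ (k + 1) := by ring
        _ = -bc (ν + 1) k * t ^ (k + 1) := by rw [this]
        _ = -(t * (bc (ν + 1) k * t ^ k)) := by rw [pow_succ]; ring
    rw [tsum_congr e2, tsum_neg, tsum_mul_left, bS]
  linarith [key]
lemma besselJ_eq (ν : ℝ) {z : ℝ} (hz : 0 < z) :
    besselJ ν z = (z / 2) ^ ν * bS ν ((z / 2) ^ 2) := by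
  rw [besselJ, bS, ← tsum_mul_left]
  apply tsum_congr
  intro k
  have h2 : (0 : ℝ) < z / 2 := by linarith
  have hexp : (z / 2) ^ (2 * (k : ℝ) + ν) = ((z / 2) ^ 2) ^ k * (z / 2) ^ ν := by
    rw [Real.rpow_add h2]
    congr 1
    rw [show (2 : ℝ) * (k : ℝ) = ((2 * k : ℕ) : ℝ) by push_cast; ring,
      Real.rpow_natCast, pow_mul]
  rw [hexp, bc]
  ring

lemma besselJ_sqrt (ν : ℝ) {t : ℝ} (ht : 0 < t) :
    besselJ ν (2 * Real.sqrt t) = t ^ (ν / 2) * bS ν t := by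
  have hz : 0 < 2 * Real.sqrt t := by positivity
  rw [besselJ_eq ν hz, show 2 * Real.sqrt t / 2 = Real.sqrt t by ring,
    Real.sq_sqrt ht.le]
  congr 1
  rw [Real.sqrt_eq_rpow, ← Real.rpow_mul ht.le, show (1:ℝ)/2 * ν = ν/2 by ring]

lemma block_hasDerivAt {ν a c x : ℝ} (hν : ∀ m : ℤ, ν ≠ (m : ℝ)) (ha : 0 < a) (hx : 0 < x) :
    HasDerivAt (fun y : ℝ => (a * y) ^ c * bS ν (a * y))
      ((1 / x) * (c * (a * x) ^ c * bS ν (a * x)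
        - (a * x) ^ (c + 1) * bS (ν + 1) (a * x))) x := by
  have hax : 0 < a * x := mul_pos ha hx
  have h1 : HasDerivAt (fun y : ℝ => a * y) a x := by
    simpa using (hasDerivAt_id x).const_mul a
  have h2 : HasDerivAt (fun y : ℝ => (a * y) ^ c) (c * (a * x) ^ (c - 1) * a) x :=
    (Real.hasDerivAt_rpow_const (p := c) (Or.inl hax.ne')).comp x h1
  have h3 : HasDerivAt (fun y : ℝ => bS ν (a * y)) (-bS (ν + 1) (a * x) * a) x :=
    (bS_hasDerivAt hν (a * x)).comp x h1
  have h4 := h2.mul h3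
  refine h4.congr_deriv ?_
  rw [Real.rpow_sub_one hax.ne', Real.rpow_add_one hax.ne']
  field_simp
  ring
/-- **The closed-form Bessel-ratio solution of the singular Riccati equation** (the
paper's (riccati_soln), with `Y_ν` rewritten as a combination of `J_ν` and `J_{-ν}`):
on any open interval `I ⊆ (0,∞)` where the denominator does not vanish,
`w(x) = (√(αβx)/β)·(λ J_{β-1}(2√(αβx)) - μ J_{1-β}(2√(αβx)))
        /(λ J_β(2√(αβx)) + μ J_{-β}(2√(αβx)))`
satisfies `x w' - β w + β w² + α x = 0`. -/
theorem riccati_bessel_solution (α β : ℝ) (hα : 0 < α) (hβpos : 0 < β)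
    (hβ : ∀ k : ℤ, β ≠ (k : ℝ))
    (lam mu : ℝ) (hlm : ¬(lam = 0 ∧ mu = 0))
    (I : Set ℝ) (hIopen : IsOpen I) (hIinterval : I.OrdConnected)
    (hIpos : I ⊆ Set.Ioi (0 : ℝ))
    (hden : ∀ x ∈ I,
      lam * besselJ β (2 * Real.sqrt (α * β * x))
        + mu * besselJ (-β) (2 * Real.sqrt (α * β * x)) ≠ 0)
    (w : ℝ → ℝ)
    (hw : ∀ x, w x =
      (Real.sqrt (α * β * x) / β) *
        (lam * besselJ (β - 1) (2 * Real.sqrt (α * β * x))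
          - mu * besselJ (1 - β) (2 * Real.sqrt (α * β * x))) /
        (lam * besselJ β (2 * Real.sqrt (α * β * x))
          + mu * besselJ (-β) (2 * Real.sqrt (α * β * x)))) :
    ∀ x ∈ I, x * deriv w x - β * w x + β * (w x) ^ 2 + α * x = 0 := by
  have ha : 0 < α * β := mul_pos hα hβpos
  set a : ℝ := α * β with ha_def
  have hβ0 : β ≠ 0 := hβpos.ne'
  have hb1 : ∀ m : ℤ, β - 1 ≠ (m : ℝ) := fun m h => hβ (m + 1) (by push_cast; linarith)
  have hmb : ∀ m : ℤ, -β ≠ (m : ℝ) := fun m h => hβ (-m) (by push_cast; linarith)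
  have h1b : ∀ m : ℤ, 1 - β ≠ (m : ℝ) := fun m h => hβ (1 - m) (by push_cast; linarith)
  -- the numerator and denominator as smooth functions
  set F : ℝ → ℝ := fun y => (1 / β) *
      (lam * ((a * y) ^ (β / 2) * bS (β - 1) (a * y))
        - mu * ((a * y) ^ (1 - β / 2) * bS (1 - β) (a * y))) with hF_def
  set G : ℝ → ℝ := fun y => lam * ((a * y) ^ (β / 2) * bS β (a * y))
      + mu * ((a * y) ^ (-(β / 2)) * bS (-β) (a * y)) with hG_def
  -- pointwise identification on I
  have hGy : ∀ y ∈ I, lam * besselJ β (2 * Real.sqrt (a * y))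
      + mu * besselJ (-β) (2 * Real.sqrt (a * y)) = G y := by
    intro y hy
    have hay : 0 < a * y := mul_pos ha (hIpos hy)
    rw [besselJ_sqrt _ hay, besselJ_sqrt _ hay, hG_def,
      show -β / 2 = -(β / 2) by ring]
  have hFy : ∀ y ∈ I, (Real.sqrt (a * y) / β) *
      (lam * besselJ (β - 1) (2 * Real.sqrt (a * y))
        - mu * besselJ (1 - β) (2 * Real.sqrt (a * y))) = F y := by
    intro y hy
    have hay : 0 < a * y := mul_pos ha (hIpos hy)
    rw [besselJ_sqrt _ hay, besselJ_sqrt _ hay, hF_def]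
    have hs : Real.sqrt (a * y) = (a * y) ^ ((1:ℝ)/2) := Real.sqrt_eq_rpow _
    have e1 : (a * y) ^ ((1:ℝ)/2) * (a * y) ^ ((β - 1) / 2) = (a * y) ^ (β / 2) := by
      rw [← Real.rpow_add hay, show (1:ℝ)/2 + (β - 1)/2 = β/2 by ring]
    have e2 : (a * y) ^ ((1:ℝ)/2) * (a * y) ^ ((1 - β) / 2) = (a * y) ^ (1 - β / 2) := by
      rw [← Real.rpow_add hay, show (1:ℝ)/2 + (1 - β)/2 = 1 - β/2 by ring]
    rw [hs]
    linear_combination (lam / β * bS (β - 1) (a * y)) * e1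
      - (mu / β * bS (1 - β) (a * y)) * e2
  have hwFG : ∀ y ∈ I, w y = F y / G y := by
    intro y hy
    rw [hw y, ← hGy y hy, ← hFy y hy]
  intro x hx
  have hx0 : 0 < x := hIpos hx
  have hax : 0 < a * x := mul_pos ha hx0
  -- derivatives of the four building blocks
  have B1 := block_hasDerivAt (a := a) (c := β / 2) (x := x) hb1 ha hx0
  have B2 := block_hasDerivAt (a := a) (c := 1 - β / 2) (x := x) h1b ha hx0
  have B3 := block_hasDerivAt (a := a) (c := β / 2) (x := x) hβ ha hx0
  have B4 := block_hasDerivAt (a := a) (c := -(β / 2)) (x := x) hmb ha hx0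
  rw [show β - 1 + 1 = β by ring] at B1
  rw [show 1 - β + 1 = 2 - β by ring] at B2
  have hF' : HasDerivAt F ((1 / β) *
      (lam * ((1 / x) * (β / 2 * (a * x) ^ (β / 2) * bS (β - 1) (a * x)
          - (a * x) ^ (β / 2 + 1) * bS β (a * x)))
        - mu * ((1 / x) * ((1 - β / 2) * (a * x) ^ (1 - β / 2) * bS (1 - β) (a * x)
          - (a * x) ^ (1 - β / 2 + 1) * bS (2 - β) (a * x))))) x :=
    ((B1.const_mul lam).sub (B2.const_mul mu)).const_mul (1 / β)
  have hG' : HasDerivAt G (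
      lam * ((1 / x) * (β / 2 * (a * x) ^ (β / 2) * bS β (a * x)
          - (a * x) ^ (β / 2 + 1) * bS (β + 1) (a * x)))
        + mu * ((1 / x) * (-(β / 2) * (a * x) ^ (-(β / 2)) * bS (-β) (a * x)
          - (a * x) ^ (-(β / 2) + 1) * bS (-β + 1) (a * x)))) x :=
    (B3.const_mul lam).add (B4.const_mul mu)
  set fd := (1 / β) *
      (lam * ((1 / x) * (β / 2 * (a * x) ^ (β / 2) * bS (β - 1) (a * x)
          - (a * x) ^ (β / 2 + 1) * bS β (a * x)))
        - mu * ((1 / x) * ((1 - β / 2) * (a * x) ^ (1 - β / 2) * bS (1 - β) (a * x)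
          - (a * x) ^ (1 - β / 2 + 1) * bS (2 - β) (a * x)))) with hfd_def
  set gd := lam * ((1 / x) * (β / 2 * (a * x) ^ (β / 2) * bS β (a * x)
          - (a * x) ^ (β / 2 + 1) * bS (β + 1) (a * x)))
        + mu * ((1 / x) * (-(β / 2) * (a * x) ^ (-(β / 2)) * bS (-β) (a * x)
          - (a * x) ^ (-(β / 2) + 1) * bS (-β + 1) (a * x))) with hgd_def
  -- rpow identities
  have I1 : (a * x) ^ (β / 2 + 1) = (a * x) ^ (β / 2) * (a * x) :=
    Real.rpow_add_one hax.ne' _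
  have I2 : (a * x) ^ (1 - β / 2 + 1) = (a * x) ^ (1 - β / 2) * (a * x) :=
    Real.rpow_add_one hax.ne' _
  have I3 : (a * x) ^ (1 - β / 2) = (a * x) ^ (-(β / 2)) * (a * x) := by
    rw [show 1 - β / 2 = -(β / 2) + 1 by ring]; exact Real.rpow_add_one hax.ne' _
  have I4 : (a * x) ^ (-(β / 2) + 1) = (a * x) ^ (-(β / 2)) * (a * x) :=
    Real.rpow_add_one hax.ne' _
  -- recurrences
  have R1 := bS_rec hβ (a * x)
  have R2 := bS_rec h1b (a * x)
  rw [show 1 - β - 1 = -β by ring, show 1 - β + 1 = 2 - β by ring] at R2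
  -- the two key relations
  have hfd : x * fd = β / 2 * F x - α * x * G x := by
    rw [hfd_def, hF_def, hG_def]
    simp only
    rw [I1, I2, I3]
    field_simp
    rw [show x * a = a * x by ring]
    linear_combination (2*mu*((a*x) ^ (-(β/2) : ℝ))*(a*x)) * R2
      - (2*x*(lam*((a*x) ^ (β/2))*bS β (a*x) + mu*((a*x) ^ (-(β/2) : ℝ))*bS (-β) (a*x))) * ha_def
  have hgd : x * gd = β * F x - β / 2 * G x := by
    rw [hgd_def, hF_def, hG_def]
    simp only
    rw [show -β + 1 = 1 - β by ring, I1, I4, I3]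
    field_simp
    rw [show x * a = a * x by ring]
    linear_combination (-(2*lam*((a*x) ^ (β/2)))) * R1
  have hGx : G x ≠ 0 := by rw [← hGy x hx]; exact hden x hx
  have hdiv : HasDerivAt (fun y => F y / G y) ((fd * G x - F x * gd) / G x ^ 2) x :=
    hF'.div hG' hGx
  have hwev : w =ᶠ[nhds x] fun y => F y / G y := by
    filter_upwards [hIopen.mem_nhds hx] with y hy
    exact hwFG y hy
  have hwd : HasDerivAt w ((fd * G x - F x * gd) / G x ^ 2) x :=
    hdiv.congr_of_eventuallyEq hwev
  rw [hwd.deriv, hwFG x hx]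
  field_simp
  linear_combination (G x) * hfd - (F x) * hgd
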